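/- Let R be a finite commutative local ring with residue field F_2 and |R| = 2^n. Then the relative Davenport constant D(R, {0}) of the multiplicative monoid of R satisfies D(R, {0}) ≤ n + 1. -/

import Mathlib

/-- A list (sequence) in a commutative monoid is reducible if a proper
subsequence has the same product. -/
def Reducible {M : Type*} [CommMonoid M] (A : List M) : Prop :=
  ∃ B : List M, List.Sublist B A ∧ B.length < A.length ∧ B.prod = A.prod

/-- The Davenport constant: the least positive `n` such that every sequence of
length `n` is reducible (`⊤` if none exists). -/
noncomputable def davenport (M : Type*) [CommMonoid M] : ℕ∞ :=
  sInf {k : ℕ∞ | ∃ n : ℕ, k = n ∧ 0 < n ∧ ∀ A : List M, A.length = n → Reducible A}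

/-- An ideal of a commutative monoid. -/
def IsMulIdeal {M : Type*} [CommMonoid M] (T : Set M) : Prop :=
  ∀ s t : M, t ∈ T → s * t ∈ T

/-- The relative Davenport constant `D(S, T)`: the least positive `n` such
that every sequence of length `n` with product in `T` is reducible. -/
noncomputable def davenportRel (M : Type*) [CommMonoid M] (T : Set M) : ℕ∞ :=
  sInf {k : ℕ∞ | ∃ n : ℕ, k = n ∧ 0 < n ∧
    ∀ A : List M, A.length = n → A.prod ∈ T → Reducible A}

/-- `(S, T)` is a unit-stabilized pair. -/
def UnitStabilizedPair (M : Type*) [CommMonoid M] (T : Set M) : Prop :=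
  ∀ a b : M, a * b ∉ T →
    {u : Mˣ | (u : M) * a = a} = {u : Mˣ | (u : M) * (a * b) = a * b} →
    ∃ u : Mˣ, a * b = a * u

section Aux

variable {R : Type*} [CommRing R]

/-- The annihilator ideal of a single element. -/
def annId (a : R) : Ideal R where
  carrier := {x | x * a = 0}
  add_mem' := by
    intro x y hx hy
    simp only [Set.mem_setOf_eq] at *
    rw [add_mul, hx, hy, add_zero]
  zero_mem' := by simp
  smul_mem' := by
    intro c x hx
    simp only [Set.mem_setOf_eq, smul_eq_mul] at *
    rw [mul_assoc, hx, mul_zero]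

lemma mem_annId {a x : R} : x ∈ annId a ↔ x * a = 0 := Iff.rfl

lemma annId_eq_ker (a : R) : annId a = LinearMap.ker (LinearMap.toSpanSingleton R R a) := by
  ext x
  simp [mem_annId, LinearMap.mem_ker, LinearMap.toSpanSingleton_apply, smul_eq_mul]

/-- Key lemma: multiplying by a nonzero nonunit strictly increases the annihilator. -/
lemma annId_lt [IsLocalRing R] [Finite R] {a b : R} (hb : ¬ IsUnit b) (hab : a * b ≠ 0) :
    annId a < annId (a * b) := by
  have hle : annId a ≤ annId (a * b) := by
    intro x hx
    rw [mem_annId] at hx ⊢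
    rw [← mul_assoc, hx, zero_mul]
  refine lt_of_le_of_ne hle ?_
  intro heq
  -- cardinalities of quotients / spans
  have hc : ∀ c : R, Nat.card (R ⧸ annId c) = Nat.card (Ideal.span {c} : Ideal R) := by
    intro c
    rw [annId_eq_ker, Ideal.span, LinearMap.span_singleton_eq_range]
    exact Nat.card_congr (LinearMap.quotKerEquivRange (LinearMap.toSpanSingleton R R c)).toEquiv
  have hcard : Nat.card (Ideal.span {a} : Ideal R) = Nat.card (Ideal.span {a * b} : Ideal R) := by
    rw [← hc, ← hc, heq]
  have hsub : Ideal.span {a * b} ≤ Ideal.span ({a} : Set R) :=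
    Ideal.span_singleton_le_span_singleton.mpr ⟨b, rfl⟩
  have hsetle : (Ideal.span {a * b} : Set R) ⊆ (Ideal.span ({a} : Set R) : Set R) := hsub
  have hseteq : (Ideal.span {a * b} : Set R) = (Ideal.span ({a} : Set R) : Set R) := by
    refine Set.eq_of_subset_of_ncard_le hsetle ?_ (Set.toFinite _)
    rw [← Nat.card_coe_set_eq, ← Nat.card_coe_set_eq]
    exact le_of_eq hcard
  have ha : a ∈ Ideal.span ({a * b} : Set R) := by
    rw [← SetLike.mem_coe, hseteq]
    exact Ideal.mem_span_singleton.mpr dvd_rfl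
  obtain ⟨r, hr⟩ := Ideal.mem_span_singleton.mp ha
  -- a = a * b * r , so a * (1 - b * r) = 0 with 1 - b * r a unit
  have hu : IsUnit (1 - b * r) := by
    apply IsLocalRing.isUnit_one_sub_self_of_mem_nonunits
    intro hbu
    exact hb (isUnit_of_mul_isUnit_left hbu)
  have h0 : a * (1 - b * r) = 0 := by linear_combination hr
  exact hab (by
    have ha0 : a = 0 := by
      obtain ⟨u, hu'⟩ := hu
      rw [← hu'] at h0
      exact (Units.mul_left_eq_zero u).mp h0
    rw [ha0, zero_mul])

lemma two_mul_card_le [Finite R] {I J : Ideal R} (h : I < J) :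
    2 * Nat.card I ≤ Nat.card J := by
  have hle : I.toAddSubgroup ≤ J.toAddSubgroup := h.le
  have hdvd : Nat.card I ∣ Nat.card J := AddSubgroup.card_dvd_of_le hle
  have eI : Nat.card I = (I : Set R).ncard := Nat.card_coe_set_eq _
  have eJ : Nat.card J = (J : Set R).ncard := Nat.card_coe_set_eq _
  have hlt : Nat.card I < Nat.card J := by
    rw [eI, eJ]
    exact Set.ncard_lt_ncard (SetLike.coe_ssubset_coe.mpr h) (Set.toFinite _)
  have hpos : 0 < Nat.card I := Nat.card_pos
  obtain ⟨m, hm⟩ := hdvd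
  have hm2 : 2 ≤ m := by
    by_contra hm2
    interval_cases m <;> omega
  calc 2 * Nat.card I ≤ m * Nat.card I := by exact Nat.mul_le_mul_right _ hm2
    _ = Nat.card J := by rw [hm, mul_comm]

end Aux

theorem rel_davenport_zero_le {R : Type*} [CommRing R] [IsLocalRing R] [Finite R]
    (n : ℕ) (hcard : Nat.card R = 2 ^ n)
    (hres : Nonempty (IsLocalRing.ResidueField R ≃+* ZMod 2)) :
    davenportRel R {0} ≤ (n : ℕ∞) + 1 := by
  classical
  have key : ∀ A : List R, A.length = n + 1 → A.prod ∈ ({0} : Set R) → Reducible A := by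
    intro A hlen hprod
    rw [Set.mem_singleton_iff] at hprod
    by_contra hred
    -- every strictly shorter sublist has nonzero product
    have F1 : ∀ B : List R, B.Sublist A → B.length < n + 1 → B.prod ≠ 0 := by
      intro B hB hBl hB0
      exact hred ⟨B, hB, by omega, by rw [hB0, hprod]⟩
    -- every element is a nonunit
    have F2 : ∀ a ∈ A, ¬ IsUnit a := by
      intro a ha hu
      have hmem : a * (A.erase a).prod = A.prod := List.prod_erase ha
      have h0 : (A.erase a).prod = 0 := by
        rw [hprod] at hmem
        exact (hu.mul_right_eq_zero).mp hmem
      have hlen' : (A.erase a).length < A.length := by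
        rw [List.length_erase_of_mem ha]
        omega
      exact hred ⟨A.erase a, List.erase_sublist, hlen', by rw [h0, hprod]⟩
    -- partial products
    set p : ℕ → R := fun k => (A.take k).prod with hp
    have hpsucc : ∀ (k : ℕ) (hk : k < n + 1), p (k + 1) = p k * A[k]'(by omega) := by
      intro k hk
      exact List.prod_take_succ A k (by omega)
    have hpne : ∀ k, k ≤ n → p k ≠ 0 := by
      intro k hk
      refine F1 _ (List.take_sublist k A) ?_
      rw [List.length_take, hlen]
      omega
    have claim : ∀ k, k ≤ n → 2 ^ k ≤ Nat.card (annId (p k)) := by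
      intro k
      induction k with
      | zero =>
        intro _
        rw [pow_zero]
        exact Nat.card_pos
      | succ k ih =>
        intro hk
        have h1 := ih (by omega)
        have hlt : annId (p k) < annId (p (k + 1)) := by
          rw [hpsucc k (by omega)]
          refine annId_lt (F2 _ (A.getElem_mem _)) ?_
          rw [← hpsucc k (by omega)]
          exact hpne (k + 1) hk
        calc 2 ^ (k + 1) = 2 * 2 ^ k := by ring
          _ ≤ 2 * Nat.card (annId (p k)) := Nat.mul_le_mul_left 2 h1
          _ ≤ Nat.card (annId (p (k + 1))) := two_mul_card_le hlt
    have hn := claim n le_rfl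
    have hproper : Nat.card (annId (p n)) < Nat.card R := by
      have e1 : Nat.card (annId (p n)) = ((annId (p n) : Set R)).ncard :=
        Nat.card_coe_set_eq _
      rw [e1, ← Set.ncard_univ R]
      refine Set.ncard_lt_ncard ?_ (Set.toFinite _)
      constructor
      · exact Set.subset_univ _
      · intro hsub
        have h1 : (1 : R) ∈ annId (p n) := hsub (Set.mem_univ 1)
        rw [mem_annId, one_mul] at h1
        exact hpne n le_rfl h1
    rw [hcard] at hproper
    omega
  refine sInf_le ?_
  refine ⟨n + 1, ?_, Nat.succ_pos n, key⟩
  push_cast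
  ring
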